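/- Let Q, R, S, T be the matrices built from interleaved sequences as in the Yang construction: with a' = a/0, b' = b/0, c' = 0/c, d' = 0/d ∈ R^{2n+1} and f' = f/0, g' = g/0, h' = 0/h, e' = 0/e ∈ R^{2m+1}, Q = f'*^t a' + g'^t c' − e'^t b'* + h'^t d', R = f'*^t b' + g'*^t d' + e'^t a'* − h'*^t c', S = g'*^t a' − f'^t c' − h'^t b' − e'^t d'*, T = g'^t b' − f'^t d' + h'*^t a' + e'^t c'*. Then (ψ_Q ψ_Q* + ψ_R ψ_R* + ψ_S ψ_S* + ψ_T ψ_T*)(x, y) = (ψ_a ψ_a* + ψ_b ψ_b* + ψ_c ψ_c* + ψ_d ψ_d*)(x²) · (ψ_e ψ_e* + ψ_f ψ_f* + ψ_g ψ_g* + ψ_h ψ_h*)(y²). -/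

import Mathlib

noncomputable section
open LaurentPolynomial Finset

variable {R : Type*}

/-- The Hall polynomial `φ_a(x) = Σ aᵢ xⁱ` of a sequence. -/
def hallPhi [CommRing R] {l : ℕ} (a : Fin l → R) : LaurentPolynomial R :=
  ∑ i, C (a i) * T (i : ℤ)

/-- `ψ_a(x) = x^{1-l} φ_a(x²) = Σ aᵢ x^{2i+1-l}`. -/
def hallPsi [CommRing R] {l : ℕ} (a : Fin l → R) : LaurentPolynomial R :=
  ∑ i, C (a i) * T (2 * (i : ℤ) + 1 - l)

/-- Extension of an involution `σ` on `R` to Laurent polynomials, sending `x ↦ x⁻¹`. -/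
def lstar [CommRing R] (σ : R →+* R) (f : LaurentPolynomial R) : LaurentPolynomial R :=
  AddMonoidAlgebra.ofCoeff (Finsupp.equivMapDomain (Equiv.neg ℤ) (Finsupp.mapRange σ σ.map_zero f.coeff))

/-- Non-periodic autocorrelation `N_a(j) = Σ_{i=0}^{l-j-1} aᵢ σ(a_{i+j})`. -/
def autocorr [CommRing R] (σ : R → R) {l : ℕ} (a : Fin l → R) (j : ℕ) : R :=
  ∑ i : Fin l, if h : (i : ℕ) + j < l then a i * σ (a ⟨(i : ℕ) + j, h⟩) else 0

/-- Reversed conjugated sequence `a* = (σ a_{l-1},…,σ a₀)`. -/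
def revSeq (σ : R → R) {l : ℕ} (a : Fin l → R) : Fin l → R :=
  fun i => σ (a i.rev)

/-- Substitution `x ↦ x²` on Laurent polynomials. -/
def subSq [CommRing R] : LaurentPolynomial R →+* LaurentPolynomial R :=
  AddMonoidAlgebra.mapDomainRingHom R ((2 : ℤ) • AddMonoidHom.id ℤ)

/-- Laurent polynomials in two variables `x, y`. -/
abbrev Laurent2 (R : Type*) [CommRing R] := AddMonoidAlgebra R (ℤ × ℤ)

/-- A single-variable `ψ_a(x)` viewed in the two-variable ring. -/
def psiX [CommRing R] {l : ℕ} (a : Fin l → R) : Laurent2 R :=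
  ∑ i : Fin l, AddMonoidAlgebra.single ((2 * (i : ℤ) + 1 - l, (0 : ℤ)) : ℤ × ℤ) (a i)

/-- A single-variable `ψ_a(y)` viewed in the two-variable ring. -/
def psiY [CommRing R] {l : ℕ} (a : Fin l → R) : Laurent2 R :=
  ∑ i : Fin l, AddMonoidAlgebra.single (((0 : ℤ), 2 * (i : ℤ) + 1 - l) : ℤ × ℤ) (a i)

/-- `ψ_A(x,y) = Σᵢ ψ_{aᵢ}(x) y^{2i+1-m}` for a matrix `A` with rows `aᵢ`. -/
def psiMat [CommRing R] {m n : ℕ} (A : Fin m → Fin n → R) : Laurent2 R :=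
  ∑ i : Fin m, psiX (A i) * AddMonoidAlgebra.single (((0 : ℤ), 2 * (i : ℤ) + 1 - m) : ℤ × ℤ) (1 : R)

/-- Involution on two-variable Laurent polynomials: `x ↦ x⁻¹`, `y ↦ y⁻¹`, `σ` on coefficients. -/
def lstar2 [CommRing R] (σ : R →+* R) (f : Laurent2 R) : Laurent2 R :=
  AddMonoidAlgebra.ofCoeff (Finsupp.equivMapDomain (Equiv.neg (ℤ × ℤ)) (Finsupp.mapRange σ σ.map_zero f.coeff))

/-- Outer product matrix `(f^t a)_{ij} = fᵢ aⱼ`. -/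
def outer [CommRing R] {m n : ℕ} (f : Fin m → R) (a : Fin n → R) : Fin m → Fin n → R :=
  fun i j => f i * a j

/-- Concatenation of the rows of a matrix. -/
def seqMat [CommRing R] {m n : ℕ} (A : Fin m → Fin n → R) : Fin (m * n) → R :=
  fun k =>
    A ⟨(k : ℕ) / n, Nat.div_lt_of_lt_mul (Nat.mul_comm m n ▸ k.isLt)⟩
      ⟨(k : ℕ) % n, Nat.mod_lt _ (Nat.pos_of_ne_zero (by rintro rfl; exact absurd k.isLt (by simp)))⟩

/-- The substitution `y = xⁿ`, as an additive monoid hom on exponents. -/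
def specHom (n : ℕ) : (ℤ × ℤ) →+ ℤ :=
  AddMonoidHom.fst ℤ ℤ + (n : ℤ) • AddMonoidHom.snd ℤ ℤ

/-- Substituting `y = xⁿ` in a two-variable Laurent polynomial. -/
def specialize [CommRing R] (n : ℕ) : Laurent2 R →+* LaurentPolynomial R :=
  AddMonoidAlgebra.mapDomainRingHom R (specHom n)

/-- `a/0 = (a₀,0,a₁,…,0,a_l)`, interleaving zeros (length `2l+1` from length `l+1`). -/
def div0 [CommRing R] {l : ℕ} (a : Fin (l + 1) → R) : Fin (2 * l + 1) → R :=
  fun i => if h : (i : ℕ) % 2 = 0 then a ⟨(i : ℕ) / 2, by have := i.isLt; omega⟩ else 0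

/-- `0/a = (0,a₀,0,…,a_{l-1},0)` (length `2l+1` from length `l`). -/
def zdiv [CommRing R] {l : ℕ} (a : Fin l → R) : Fin (2 * l + 1) → R :=
  fun i => if h : (i : ℕ) % 2 = 1 then a ⟨(i : ℕ) / 2, by have := i.isLt; omega⟩ else 0

/-- `a/0` for arbitrary length `l`, giving length `2l-1`. -/
def interDiv0 [CommRing R] {l : ℕ} (a : Fin l → R) : Fin (2 * l - 1) → R :=
  fun i => if h : (i : ℕ) % 2 = 0 then a ⟨(i : ℕ) / 2, by have := i.isLt; omega⟩ else 0

/-- `0/a` for arbitrary length `l`, giving length `2l+1`. -/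
def interZero [CommRing R] {l : ℕ} (a : Fin l → R) : Fin (2 * l + 1) → R :=
  fun i => if h : (i : ℕ) % 2 = 1 then a ⟨(i : ℕ) / 2, by have := i.isLt; omega⟩ else 0

/-- Substitution doubling all exponents, on two-variable Laurent polynomials. -/
def subSq2 [CommRing R] : Laurent2 R →+* Laurent2 R :=
  AddMonoidAlgebra.mapDomainRingHom R ((2 : ℤ) • AddMonoidHom.id (ℤ × ℤ))



section YangLemmas
variable [CommRing R] (σ : R →+* R)

theorem lstar2_apply (f : Laurent2 R) (q : ℤ × ℤ) : (lstar2 σ f).coeff q = σ (f.coeff (-q)) := by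
  simp [lstar2]

theorem lstar2_single (p : ℤ × ℤ) (r : R) :
    lstar2 σ (AddMonoidAlgebra.single p r) = AddMonoidAlgebra.single (-p) (σ r) := by
  ext q
  simp only [lstar2_apply, AddMonoidAlgebra.coeff_single, Finsupp.single_apply]
  rcases eq_or_ne p (-q) with h | h
  · simp [h, neg_neg]
  · rw [if_neg h, if_neg (fun hq => h (by rw [← hq, neg_neg])), map_zero]

theorem add_apply2 (f g : Laurent2 R) (q : ℤ × ℤ) : (f + g).coeff q = f.coeff q + g.coeff q := rfl

theorem sub_apply2 (f g : Laurent2 R) (q : ℤ × ℤ) : (f - g).coeff q = f.coeff q - g.coeff q := rfl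

theorem neg_apply2 (f : Laurent2 R) (q : ℤ × ℤ) : (-f).coeff q = -(f.coeff q) := rfl

theorem lstar2_add (f g : Laurent2 R) : lstar2 σ (f + g) = lstar2 σ f + lstar2 σ g := by
  ext q; simp [lstar2_apply, add_apply2, map_add]

theorem lstar2_zero : lstar2 σ (0 : Laurent2 R) = 0 := by
  ext q; simp [lstar2_apply]

theorem lstar2_neg (f : Laurent2 R) : lstar2 σ (-f) = -lstar2 σ f := by
  ext q; simp [lstar2_apply, neg_apply2]

theorem lstar2_sub (f g : Laurent2 R) : lstar2 σ (f - g) = lstar2 σ f - lstar2 σ g := by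
  ext q; simp [lstar2_apply, sub_apply2, map_sub]

theorem lstar2_mul (f g : Laurent2 R) : lstar2 σ (f * g) = lstar2 σ f * lstar2 σ g := by
  induction f using AddMonoidAlgebra.induction_linear with
  | zero => simp [lstar2_zero]
  | add f₁ f₂ h1 h2 => rw [add_mul, lstar2_add, lstar2_add, add_mul, h1, h2]
  | single p r =>
    induction g using AddMonoidAlgebra.induction_linear with
    | zero => simp [lstar2_zero]
    | add g₁ g₂ h1 h2 => rw [mul_add, lstar2_add, lstar2_add, mul_add, h1, h2]
    | single q s =>
      show lstar2 σ (AddMonoidAlgebra.single p r * AddMonoidAlgebra.single q s) = _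
      rw [AddMonoidAlgebra.single_mul_single, lstar2_single, lstar2_single, lstar2_single,
        AddMonoidAlgebra.single_mul_single, neg_add, map_mul]

theorem lstar2_lstar2 (hσ : ∀ r, σ (σ r) = r) (f : Laurent2 R) :
    lstar2 σ (lstar2 σ f) = f := by
  ext q; simp [lstar2_apply, hσ]

theorem subSq2_single (p : ℤ × ℤ) (r : R) :
    subSq2 (AddMonoidAlgebra.single p r) = AddMonoidAlgebra.single (2 • p) r := by
  simp [subSq2, AddMonoidAlgebra.mapDomainRingHom, Finsupp.mapDomain_single]

theorem subSq2_lstar2 (f : Laurent2 R) : subSq2 (lstar2 σ f) = lstar2 σ (subSq2 f) := by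
  induction f using AddMonoidAlgebra.induction_linear with
  | zero => rw [lstar2_zero, map_zero, lstar2_zero]
  | add f g hf hg => rw [lstar2_add, map_add, map_add, lstar2_add, hf, hg]
  | single p r =>
    show subSq2 (lstar2 σ (AddMonoidAlgebra.single p r)) =
      lstar2 σ (subSq2 (AddMonoidAlgebra.single p r))
    rw [lstar2_single, subSq2_single, subSq2_single, lstar2_single, smul_neg]

theorem sum_fin_even {M : Type*} [AddCommMonoid M] (l : ℕ) (g : ℕ → M)
    (hodd : ∀ i, i % 2 = 1 → g i = 0) :
    ∑ i : Fin (2 * l + 1), g i = ∑ k : Fin (l + 1), g (2 * k) := by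
  rw [Fin.sum_univ_eq_sum_range g (2 * l + 1), Fin.sum_univ_eq_sum_range (fun k => g (2 * k)) (l + 1)]
  induction l with
  | zero => simp
  | succ l ih =>
    have h1 : 2 * (l + 1) + 1 = (2 * l + 1) + 1 + 1 := by ring
    rw [h1, Finset.sum_range_succ, Finset.sum_range_succ, ih, hodd (2 * l + 1) (by omega),
      add_zero, show 2 * l + 1 + 1 = 2 * (l + 1) from by omega,
      Finset.sum_range_succ (fun i => g (2 * i)) (l + 1)]

theorem sum_fin_odd {M : Type*} [AddCommMonoid M] (l : ℕ) (g : ℕ → M)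
    (heven : ∀ i, i % 2 = 0 → g i = 0) :
    ∑ i : Fin (2 * l + 1), g i = ∑ k : Fin l, g (2 * k + 1) := by
  rw [Fin.sum_univ_eq_sum_range g (2 * l + 1), Fin.sum_univ_eq_sum_range (fun k => g (2 * k + 1)) l]
  induction l with
  | zero => simp [heven 0 rfl]
  | succ l ih =>
    have h1 : 2 * (l + 1) + 1 = (2 * l + 1) + 1 + 1 := by ring
    rw [h1, Finset.sum_range_succ, Finset.sum_range_succ, ih, heven (2 * l + 2) (by omega),
      add_zero, Finset.sum_range_succ (fun i => g (2 * i + 1)) l]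

theorem lstar2_sum {ι : Type*} (s : Finset ι) (f : ι → Laurent2 R) :
    lstar2 σ (∑ i ∈ s, f i) = ∑ i ∈ s, lstar2 σ (f i) :=
  map_sum (⟨⟨lstar2 σ, lstar2_zero σ⟩, lstar2_add σ⟩ : Laurent2 R →+ Laurent2 R) f s

theorem psiX_add {l : ℕ} (u v : Fin l → R) : psiX (u + v) = psiX u + psiX v := by
  simp [psiX, Finsupp.single_add, Finset.sum_add_distrib]

theorem psiX_sub {l : ℕ} (u v : Fin l → R) : psiX (u - v) = psiX u - psiX v := by
  simp [psiX, Finsupp.single_sub, Finset.sum_sub_distrib]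

theorem psiMat_add {m n : ℕ} (A B : Fin m → Fin n → R) :
    psiMat (A + B) = psiMat A + psiMat B := by
  simp [psiMat, psiX_add, add_mul, Finset.sum_add_distrib]

theorem psiMat_sub {m n : ℕ} (A B : Fin m → Fin n → R) :
    psiMat (A - B) = psiMat A - psiMat B := by
  simp [psiMat, psiX_sub, sub_mul, Finset.sum_sub_distrib]

theorem psiMat_outer {m n : ℕ} (u : Fin m → R) (v : Fin n → R) :
    psiMat (outer u v) = psiX v * psiY u := by
  rw [psiMat, psiY, Finset.mul_sum]
  refine Finset.sum_congr rfl fun i _ => ?_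
  rw [psiX, psiX, Finset.sum_mul, Finset.sum_mul]
  refine Finset.sum_congr rfl fun j _ => ?_
  rw [AddMonoidAlgebra.single_mul_single, AddMonoidAlgebra.single_mul_single]
  congr 1
  simp [outer, mul_comm]

theorem psiX_revSeq (st : R → R) (hst : st = fun r => σ r) {l : ℕ} (v : Fin l → R) :
    psiX (revSeq st v) = lstar2 σ (psiX v) := by
  subst hst
  rw [psiX, psiX, lstar2_sum]
  simp only [lstar2_single]
  refine Fintype.sum_equiv Fin.revPerm _ _ fun i => ?_
  rw [revSeq]
  congr 1
  have hi := i.isLt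
  have hv : ((i.rev : Fin l) : ℕ) = l - ((i : ℕ) + 1) := Fin.val_rev i
  simp only [Prod.ext_iff, Fin.revPerm_apply, hv, Prod.neg_mk, neg_zero, and_true]
  push_cast [Nat.cast_sub (by omega : (i:ℕ) + 1 ≤ l)]
  omega

theorem psiY_revSeq (st : R → R) (hst : st = fun r => σ r) {l : ℕ} (v : Fin l → R) :
    psiY (revSeq st v) = lstar2 σ (psiY v) := by
  subst hst
  rw [psiY, psiY, lstar2_sum]
  simp only [lstar2_single]
  refine Fintype.sum_equiv Fin.revPerm _ _ fun i => ?_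
  rw [revSeq]
  congr 1
  have hi := i.isLt
  have hv : ((i.rev : Fin l) : ℕ) = l - ((i : ℕ) + 1) := Fin.val_rev i
  simp only [Prod.ext_iff, Fin.revPerm_apply, hv, Prod.neg_mk, neg_zero, true_and]
  push_cast [Nat.cast_sub (by omega : (i:ℕ) + 1 ≤ l)]
  omega

theorem psiX_div0 {l : ℕ} (a : Fin (l + 1) → R) : psiX (div0 a) = subSq2 (psiX a) := by
  classical
  rw [psiX, psiX, map_sum]
  simp only [subSq2_single]
  set g : ℕ → Laurent2 R := fun i =>
    if h : i % 2 = 0 ∧ i / 2 < l + 1 then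
      AddMonoidAlgebra.single ((2 * (i : ℤ) - 2 * l, 0) : ℤ × ℤ) (a ⟨i / 2, h.2⟩) else 0 with hg
  have h1 : ∀ i : Fin (2 * l + 1),
      AddMonoidAlgebra.single ((2 * ((i : ℕ) : ℤ) + 1 - ((2 * l + 1 : ℕ) : ℤ), (0:ℤ)) : ℤ × ℤ)
        (div0 a i) = g (i : ℕ) := by
    intro i
    have hi := i.isLt
    by_cases h : (i : ℕ) % 2 = 0
    · rw [hg]
      beta_reduce
      rw [div0, dif_pos h, dif_pos ⟨h, by omega⟩]
      congr 1
      simp only [Prod.ext_iff, and_true]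
      push_cast
      omega
    · rw [hg]
      beta_reduce
      rw [div0, dif_neg h, dif_neg (by tauto)]
      simp
  rw [Finset.sum_congr rfl fun i _ => h1 i, sum_fin_even l g (fun i hi => by
    rw [hg]; beta_reduce; exact dif_neg (by omega))]
  refine Finset.sum_congr rfl fun k _ => ?_
  have hk := k.isLt
  rw [hg]
  beta_reduce
  rw [dif_pos ⟨by omega, by omega⟩]
  congr 1
  · simp only [Prod.ext_iff, Prod.smul_mk, smul_eq_mul, zsmul_eq_mul, mul_zero, and_true,
      smul_zero]
    push_cast [smul_eq_mul]
    ring_nf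
  · congr 1
    exact Fin.ext (by simp [Nat.mul_div_cancel_left _ (by norm_num : 0 < 2)])

theorem psiX_zdiv {l : ℕ} (a : Fin l → R) : psiX (zdiv a) = subSq2 (psiX a) := by
  classical
  rw [psiX, psiX, map_sum]
  simp only [subSq2_single]
  set g : ℕ → Laurent2 R := fun i =>
    if h : i % 2 = 1 ∧ i / 2 < l then
      AddMonoidAlgebra.single ((2 * (i : ℤ) - 2 * l, 0) : ℤ × ℤ) (a ⟨i / 2, h.2⟩) else 0 with hg
  have h1 : ∀ i : Fin (2 * l + 1),
      AddMonoidAlgebra.single ((2 * ((i : ℕ) : ℤ) + 1 - ((2 * l + 1 : ℕ) : ℤ), (0:ℤ)) : ℤ × ℤ)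
        (zdiv a i) = g (i : ℕ) := by
    intro i
    have hi := i.isLt
    by_cases h : (i : ℕ) % 2 = 1
    · rw [hg]
      beta_reduce
      rw [zdiv, dif_pos h, dif_pos ⟨h, by omega⟩]
      congr 1
      simp only [Prod.ext_iff, and_true]
      push_cast
      omega
    · rw [hg]
      beta_reduce
      rw [zdiv, dif_neg h, dif_neg (by tauto)]
      simp
  rw [Finset.sum_congr rfl fun i _ => h1 i, sum_fin_odd l g (fun i hi => by
    rw [hg]; beta_reduce; exact dif_neg (by omega))]
  refine Finset.sum_congr rfl fun k _ => ?_
  have hk := k.isLt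
  rw [hg]
  beta_reduce
  rw [dif_pos ⟨by omega, by omega⟩]
  congr 1
  · simp only [Prod.ext_iff, Prod.smul_mk, smul_eq_mul, zsmul_eq_mul, mul_zero, and_true,
      smul_zero]
    push_cast [smul_eq_mul]
    ring_nf
  · congr 1
    exact Fin.ext (by simp; omega)

theorem psiY_div0 {l : ℕ} (a : Fin (l + 1) → R) : psiY (div0 a) = subSq2 (psiY a) := by
  classical
  rw [psiY, psiY, map_sum]
  simp only [subSq2_single]
  set g : ℕ → Laurent2 R := fun i =>
    if h : i % 2 = 0 ∧ i / 2 < l + 1 then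
      AddMonoidAlgebra.single ((0, 2 * (i : ℤ) - 2 * l) : ℤ × ℤ) (a ⟨i / 2, h.2⟩) else 0 with hg
  have h1 : ∀ i : Fin (2 * l + 1),
      AddMonoidAlgebra.single (((0:ℤ), 2 * ((i : ℕ) : ℤ) + 1 - ((2 * l + 1 : ℕ) : ℤ)) : ℤ × ℤ)
        (div0 a i) = g (i : ℕ) := by
    intro i
    have hi := i.isLt
    by_cases h : (i : ℕ) % 2 = 0
    · rw [hg]
      beta_reduce
      rw [div0, dif_pos h, dif_pos ⟨h, by omega⟩]
      congr 1
      simp only [Prod.ext_iff, true_and]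
      push_cast
      omega
    · rw [hg]
      beta_reduce
      rw [div0, dif_neg h, dif_neg (by tauto)]
      simp
  rw [Finset.sum_congr rfl fun i _ => h1 i, sum_fin_even l g (fun i hi => by
    rw [hg]; beta_reduce; exact dif_neg (by omega))]
  refine Finset.sum_congr rfl fun k _ => ?_
  have hk := k.isLt
  rw [hg]
  beta_reduce
  rw [dif_pos ⟨by omega, by omega⟩]
  congr 1
  · simp only [Prod.ext_iff, Prod.smul_mk, smul_eq_mul, zsmul_eq_mul, mul_zero, true_and,
      smul_zero]
    push_cast [smul_eq_mul]
    ring_nf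
  · congr 1
    exact Fin.ext (by simp [Nat.mul_div_cancel_left _ (by norm_num : 0 < 2)])

theorem psiY_zdiv {l : ℕ} (a : Fin l → R) : psiY (zdiv a) = subSq2 (psiY a) := by
  classical
  rw [psiY, psiY, map_sum]
  simp only [subSq2_single]
  set g : ℕ → Laurent2 R := fun i =>
    if h : i % 2 = 1 ∧ i / 2 < l then
      AddMonoidAlgebra.single ((0, 2 * (i : ℤ) - 2 * l) : ℤ × ℤ) (a ⟨i / 2, h.2⟩) else 0 with hg
  have h1 : ∀ i : Fin (2 * l + 1),
      AddMonoidAlgebra.single (((0:ℤ), 2 * ((i : ℕ) : ℤ) + 1 - ((2 * l + 1 : ℕ) : ℤ)) : ℤ × ℤ)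
        (zdiv a i) = g (i : ℕ) := by
    intro i
    have hi := i.isLt
    by_cases h : (i : ℕ) % 2 = 1
    · rw [hg]
      beta_reduce
      rw [zdiv, dif_pos h, dif_pos ⟨h, by omega⟩]
      congr 1
      simp only [Prod.ext_iff, true_and]
      push_cast
      omega
    · rw [hg]
      beta_reduce
      rw [zdiv, dif_neg h, dif_neg (by tauto)]
      simp
  rw [Finset.sum_congr rfl fun i _ => h1 i, sum_fin_odd l g (fun i hi => by
    rw [hg]; beta_reduce; exact dif_neg (by omega))]
  refine Finset.sum_congr rfl fun k _ => ?_
  have hk := k.isLt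
  rw [hg]
  beta_reduce
  rw [dif_pos ⟨by omega, by omega⟩]
  congr 1
  · simp only [Prod.ext_iff, Prod.smul_mk, smul_eq_mul, zsmul_eq_mul, mul_zero, true_and,
      smul_zero]
    push_cast [smul_eq_mul]
    ring_nf
  · congr 1
    exact Fin.ext (by simp; omega)

end YangLemmas

/-- the two-variable identity for the matrices built from interleaved
sequences in the Yang construction. -/
theorem stmt16 {R : Type*} [CommRing R] (σ : R ≃+* R) (hσ : ∀ r, σ (σ r) = r)
    {m n : ℕ} (a b : Fin (n + 1) → R) (c d : Fin n → R)
    (f g : Fin (m + 1) → R) (h e : Fin m → R) :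
    let st : R → R := fun r => σ r
    let σ' : R →+* R := (σ : R →+* R)
    let a' := div0 a
    let b' := div0 b
    let c' := zdiv c
    let d' := zdiv d
    let f' := div0 f
    let g' := div0 g
    let h' := zdiv h
    let e' := zdiv e
    let Q := outer (revSeq st f') a' + outer g' c' - outer e' (revSeq st b') + outer h' d'
    let R' := outer (revSeq st f') b' + outer (revSeq st g') d' + outer e' (revSeq st a')
                - outer (revSeq st h') c'
    let S := outer (revSeq st g') a' - outer f' c' - outer h' b' - outer e' (revSeq st d')
    let T' := outer g' b' - outer f' d' + outer (revSeq st h') a' + outer e' (revSeq st c')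
    psiMat Q * lstar2 σ' (psiMat Q) + psiMat R' * lstar2 σ' (psiMat R')
        + psiMat S * lstar2 σ' (psiMat S) + psiMat T' * lstar2 σ' (psiMat T')
      = subSq2 (psiX a * lstar2 σ' (psiX a) + psiX b * lstar2 σ' (psiX b)
            + psiX c * lstar2 σ' (psiX c) + psiX d * lstar2 σ' (psiX d))
        * subSq2 (psiY e * lstar2 σ' (psiY e) + psiY f * lstar2 σ' (psiY f)
            + psiY g * lstar2 σ' (psiY g) + psiY h * lstar2 σ' (psiY h)) := by
  intro st σ' a' b' c' d' f' g' h' e' Q R' S T'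
  have hst : st = fun r => σ' r := rfl
  have hσ' : ∀ r, σ' (σ' r) = r := hσ
  unfold Q R' S T' a' b' c' d' f' g' h' e'
  simp only [psiMat_add, psiMat_sub, psiMat_outer,
    psiX_revSeq σ' st hst, psiY_revSeq σ' st hst,
    psiX_div0, psiX_zdiv, psiY_div0, psiY_zdiv,
    lstar2_add, lstar2_sub, lstar2_mul, lstar2_lstar2 σ' hσ',
    subSq2_lstar2, map_add, map_mul]
  ring

end
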